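/- Let Ψ be a Poisson point process on ℝ² of fixed intensity β/(2πζ), (h_i) i.i.d. unit-mean nonnegative marks, L a physically feasible path loss with total integral γ = ∫₀^∞ r L(r) dr, and h̃ a nonnegative random variable with mean 1 independent of everything else. Then the random variable S = L₀·h̃ / (Σ_{x_i∈Ψ} L(|x_i|)h_i + 2πγ/(αζ)) is almost surely finite and strictly positive whenever h̃ > 0, and its expectation satisfies L₀αζ/(γ(2π + αβ)) ≤ 𝔼[S] ≤ L₀αζ/(2πγ). -/

import Mathlib

open MeasureTheory ProbabilityTheory Real Set Filter ENNReal

noncomputable section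

/-- The Euclidean plane `ℝ²`. -/
abbrev Plane := EuclideanSpace ℝ (Fin 2)

/-- A Poisson point process (Poisson random measure) on a measurable space `E`
with intensity measure `Λ`, defined on a probability space `(Ω, P)`:
counts of disjoint sets are independent, and the count of any set `A` of finite
intensity is Poisson distributed with mean `Λ A`. -/
structure PoissonPP {Ω E : Type*} [MeasurableSpace Ω] [MeasurableSpace E]
    (P : Measure Ω) (Λ : Measure E) where
  N : Ω → Measure E
  measurable_count : ∀ A : Set E, MeasurableSet A → Measurable fun ω => N ω A
  poisson_count : ∀ A : Set E, MeasurableSet A → Λ A ≠ ⊤ → ∀ k : ℕ,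
    P {ω | N ω A = k} =
      ENNReal.ofReal (Real.exp (-(Λ A).toReal) * (Λ A).toReal ^ k / (Nat.factorial k))
  indep_count : ∀ A B : Set E, MeasurableSet A → MeasurableSet B → Disjoint A B →
    IndepFun (fun ω => N ω A) (fun ω => N ω B) P

/-- The marked shot noise `I(ω) = Σ_{(x_i,h_i) ∈ N(ω)} L(‖x_i‖)·h_i` of a marked
point process on `ℝ² × ℝ` (points with real marks). -/
def shotNoise {Ω : Type*} [MeasurableSpace Ω] {P : Measure Ω} {Λ : Measure (Plane × ℝ)}
    (pp : PoissonPP P Λ) (L : ℝ → ℝ) (ω : Ω) : ℝ≥0∞ :=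
  ∫⁻ p, ENNReal.ofReal (L ‖p.1‖ * p.2) ∂(pp.N ω)

/-! ### Auxiliary lemmas -/

lemma poisson_sum_one (m : ℝ) (hm : 0 ≤ m) :
    HasSum (fun k : ℕ => Real.exp (-m) * m ^ k / (Nat.factorial k)) 1 := by
  have h := ProbabilityTheory.poissonPMFRealSum m.toNNReal
  unfold ProbabilityTheory.poissonPMFReal at h
  simpa [Real.coe_toNNReal m hm] using h

lemma poisson_sum_mean (m : ℝ) (hm : 0 ≤ m) :
    HasSum (fun k : ℕ => (k : ℝ) * (Real.exp (-m) * m ^ k / (Nat.factorial k))) m := by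
  have h1 := poisson_sum_one m hm
  have h2 : HasSum (fun k : ℕ => m * (Real.exp (-m) * m ^ k / (Nat.factorial k))) m := by
    simpa using h1.mul_left m
  have key : ∀ k : ℕ, ((k + 1 : ℕ) : ℝ) * (Real.exp (-m) * m ^ (k+1) / (Nat.factorial (k+1)))
      = m * (Real.exp (-m) * m ^ k / (Nat.factorial k)) := by
    intro k
    have hfk : (Nat.factorial k : ℝ) ≠ 0 := by positivity
    have h1k : ((k : ℝ) + 1) ≠ 0 := by positivity
    rw [Nat.factorial_succ]
    push_cast
    field_simp
    ring
  have h3 : HasSum (fun k : ℕ =>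
      (fun k : ℕ => (k : ℝ) * (Real.exp (-m) * m ^ k / (Nat.factorial k))) (k + 1)) m := by
    simpa only [key] using h2
  have h4 := (hasSum_nat_add_iff (f := fun k : ℕ =>
      (k : ℝ) * (Real.exp (-m) * m ^ k / (Nat.factorial k))) 1).mp h3
  simpa using h4

lemma poisson_lintegral {Ω : Type*} [MeasurableSpace Ω] (P : Measure Ω) [IsProbabilityMeasure P]
    (X : Ω → ℝ≥0∞) (hX : Measurable X) (m : ℝ) (hm : 0 ≤ m)
    (h : ∀ k : ℕ, P {ω | X ω = k} = ENNReal.ofReal (Real.exp (-m) * m ^ k / (Nat.factorial k))) :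
    ∫⁻ ω, X ω ∂P = ENNReal.ofReal m := by
  set T : ℕ → Set Ω := fun k => X ⁻¹' {(k : ℝ≥0∞)} with hTdef
  have hTm : ∀ k, MeasurableSet (T k) := fun k => hX (measurableSet_singleton _)
  have hTd : Pairwise (Function.onFun Disjoint T) := by
    intro i j hij
    refine Set.disjoint_left.mpr fun ω hi hj => hij ?_
    exact Nat.cast_injective ((hi : X ω = (i : ℝ≥0∞)).symm.trans hj)
  have hPT : ∀ k, P (T k) = ENNReal.ofReal (Real.exp (-m) * m ^ k / (Nat.factorial k)) := h
  have hP : P (⋃ k, T k) = 1 := by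
    rw [measure_iUnion hTd hTm, tsum_congr hPT,
      ← ENNReal.ofReal_tsum_of_nonneg (fun k => by positivity) (poisson_sum_one m hm).summable,
      (poisson_sum_one m hm).tsum_eq, ENNReal.ofReal_one]
  have hfull : (⋃ k, T k) =ᵐ[P] (Set.univ : Set Ω) :=
    ae_eq_univ.mpr ((prob_compl_eq_zero_iff (MeasurableSet.iUnion hTm)).mpr hP)
  calc ∫⁻ ω, X ω ∂P = ∫⁻ ω in ⋃ k, T k, X ω ∂P := by
        rw [Measure.restrict_congr_set hfull, Measure.restrict_univ]
    _ = ∑' k, ∫⁻ ω in T k, X ω ∂P := lintegral_iUnion hTm hTd X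
    _ = ∑' k : ℕ, ENNReal.ofReal ((k : ℝ) * (Real.exp (-m) * m ^ k / (Nat.factorial k))) := by
        refine tsum_congr fun k => ?_
        rw [setLIntegral_congr_fun (hTm k) (fun ω (hω : X ω = (k : ℝ≥0∞)) => hω),
          setLIntegral_const, hPT k, ← ENNReal.ofReal_natCast k,
          ← ENNReal.ofReal_mul (by positivity : (0:ℝ) ≤ (k : ℝ))]
    _ = ENNReal.ofReal m := by
        rw [← ENNReal.ofReal_tsum_of_nonneg (fun k => by positivity)
          (poisson_sum_mean m hm).summable, (poisson_sum_mean m hm).tsum_eq]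

lemma pp_count_mean {Ω E : Type*} [MeasurableSpace Ω] [MeasurableSpace E]
    {P : Measure Ω} [IsProbabilityMeasure P] {Λ : Measure E} (pp : PoissonPP P Λ)
    {A : Set E} (hA : MeasurableSet A) (hfin : Λ A ≠ ⊤) :
    ∫⁻ ω, pp.N ω A ∂P = Λ A := by
  have := poisson_lintegral P (fun ω => pp.N ω A) (pp.measurable_count A hA)
    (Λ A).toReal ENNReal.toReal_nonneg (pp.poisson_count A hA hfin)
  rwa [ENNReal.ofReal_toReal hfin] at this

lemma pp_bind_eq {Ω E : Type*} [MeasurableSpace Ω] [MeasurableSpace E]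
    {P : Measure Ω} [IsProbabilityMeasure P] {Λ : Measure E} (pp : PoissonPP P Λ)
    (B : ℕ → Set E) (hBm : ∀ n, MeasurableSet (B n)) (hBmono : Monotone B)
    (hBU : (⋃ n, B n) = Set.univ) (hBfin : ∀ n, Λ (B n) ≠ ⊤) :
    P.bind pp.N = Λ := by
  have hNmeas : Measurable pp.N :=
    Measure.measurable_of_measurable_coe _ (fun A hA => pp.measurable_count A hA)
  refine Measure.ext fun A hA => ?_
  rw [Measure.bind_apply hA hNmeas.aemeasurable]
  have hUA : (⋃ n, A ∩ B n) = A := by rw [← Set.inter_iUnion, hBU, Set.inter_univ]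
  have hmono : Monotone fun n => A ∩ B n :=
    fun i j hij => Set.inter_subset_inter_right _ (hBmono hij)
  have hABm : ∀ n, MeasurableSet (A ∩ B n) := fun n => hA.inter (hBm n)
  have hstep : ∀ n, ∫⁻ ω, pp.N ω (A ∩ B n) ∂P = Λ (A ∩ B n) := fun n =>
    pp_count_mean pp (hABm n)
      (ne_top_of_le_ne_top (hBfin n) (measure_mono Set.inter_subset_right))
  calc ∫⁻ ω, pp.N ω A ∂P = ∫⁻ ω, ⨆ n, pp.N ω (A ∩ B n) ∂P := by
        refine lintegral_congr fun ω => ?_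
        rw [← Monotone.measure_iUnion hmono, hUA]
    _ = ⨆ n, ∫⁻ ω, pp.N ω (A ∩ B n) ∂P :=
        lintegral_iSup (fun n => pp.measurable_count _ (hABm n))
          (fun i j hij ω => measure_mono (Set.inter_subset_inter_right _ (hBmono hij)))
    _ = ⨆ n, Λ (A ∩ B n) := iSup_congr hstep
    _ = Λ A := by rw [← Monotone.measure_iUnion hmono, hUA]

lemma pp_campbell {Ω E : Type*} [MeasurableSpace Ω] [MeasurableSpace E]
    {P : Measure Ω} [IsProbabilityMeasure P] {Λ : Measure E} (pp : PoissonPP P Λ)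
    (B : ℕ → Set E) (hBm : ∀ n, MeasurableSet (B n)) (hBmono : Monotone B)
    (hBU : (⋃ n, B n) = Set.univ) (hBfin : ∀ n, Λ (B n) ≠ ⊤)
    (f : E → ℝ≥0∞) (hf : Measurable f) :
    ∫⁻ ω, (∫⁻ p, f p ∂(pp.N ω)) ∂P = ∫⁻ p, f p ∂Λ := by
  have hNmeas : Measurable pp.N :=
    Measure.measurable_of_measurable_coe _ (fun A hA => pp.measurable_count A hA)
  rw [← Measure.lintegral_bind hNmeas.aemeasurable hf.aemeasurable, pp_bind_eq pp B hBm hBmono hBU hBfin]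

lemma plane_ball_vol : (volume : Measure Plane) (Metric.ball 0 1) = ENNReal.ofReal π := by
  rw [EuclideanSpace.volume_ball]
  norm_num [Fintype.card_fin, Real.Gamma_two, Real.sq_sqrt Real.pi_pos.le]

lemma lintegral_norm_plane (g : ℝ → ℝ≥0∞) (hg : Measurable g) :
    ∫⁻ x : Plane, g ‖x‖ =
      2 * ENNReal.ofReal π * ∫⁻ r in Set.Ioi (0 : ℝ), ENNReal.ofReal r * g r := by
  have hdim : Module.finrank ℝ Plane = 2 := finrank_euclideanSpace_fin
  have hnull : (volume : Measure Plane) {0} = 0 := measure_singleton 0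
  have h0 : ({0}ᶜ : Set Plane) =ᵐ[volume] Set.univ :=
    ae_eq_univ.mpr (by rw [compl_compl]; exact hnull)
  have hGmeas : Measurable fun p : Metric.sphere (0 : Plane) 1 × Set.Ioi (0 : ℝ) => g p.2 :=
    hg.comp (measurable_subtype_coe.comp measurable_snd)
  have hmp := (volume : Measure Plane).measurePreserving_homeomorphUnitSphereProd
  have hcomp := hmp.lintegral_comp hGmeas
  have hC : ∫⁻ r : Set.Ioi (0 : ℝ), g r ∂(Measure.volumeIoiPow (Module.finrank ℝ Plane - 1)) =
      ∫⁻ r in Set.Ioi (0 : ℝ), ENNReal.ofReal r * g r := by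
    rw [Measure.volumeIoiPow,
      lintegral_withDensity_eq_lintegral_mul _
        ((measurable_subtype_coe.pow_const _).ennreal_ofReal)
        (show Measurable fun r : Set.Ioi (0:ℝ) => g ↑r from hg.comp measurable_subtype_coe)]
    have hcg : ∀ a : Set.Ioi (0:ℝ),
        ((fun x : Set.Ioi (0:ℝ) => ENNReal.ofReal (↑x ^ (Module.finrank ℝ Plane - 1))) *
          fun r : Set.Ioi (0:ℝ) => g ↑r) a = (fun t : ℝ => ENNReal.ofReal t * g t) ↑a := by
      intro a; simp [hdim]
    rw [lintegral_congr hcg]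
    exact lintegral_subtype_comap (measurableSet_Ioi (a := (0:ℝ)))
      (fun t : ℝ => ENNReal.ofReal t * g t)
  calc ∫⁻ x : Plane, g ‖x‖ = ∫⁻ x in ({0}ᶜ : Set Plane), g ‖x‖ := by
        rw [← setLIntegral_univ, ← Measure.restrict_congr_set h0]
    _ = ∫⁻ x : ({0}ᶜ : Set Plane), g ‖(x : Plane)‖ ∂(volume.comap Subtype.val) :=
        (lintegral_subtype_comap (measurableSet_singleton (0 : Plane)).compl _).symm
    _ = ∫⁻ x : ({0}ᶜ : Set Plane),
          (fun p : Metric.sphere (0 : Plane) 1 × Set.Ioi (0 : ℝ) => g p.2)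
            (homeomorphUnitSphereProd Plane x) ∂(volume.comap Subtype.val) := by
        refine lintegral_congr fun x => ?_
        simp
    _ = ∫⁻ p : Metric.sphere (0 : Plane) 1 × Set.Ioi (0 : ℝ), g p.2
          ∂((volume : Measure Plane).toSphere.prod
            (Measure.volumeIoiPow (Module.finrank ℝ Plane - 1))) := hcomp
    _ = ∫⁻ _ : Metric.sphere (0 : Plane) 1,
          (∫⁻ r in Set.Ioi (0 : ℝ), ENNReal.ofReal r * g r)
          ∂(volume : Measure Plane).toSphere := by
        rw [lintegral_prod _ hGmeas.aemeasurable]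
        exact lintegral_congr fun s => hC
    _ = 2 * ENNReal.ofReal π * ∫⁻ r in Set.Ioi (0 : ℝ), ENNReal.ofReal r * g r := by
        rw [lintegral_const, Measure.toSphere_apply_univ, hdim, plane_ball_vol]
        ring

/-- the limiting SINR S = L₀h̃/(Σ_{x_i∈Ψ}L(|x_i|)h_i + 2πγ/(αζ)), where
Ψ is a PPP of intensity β/(2πζ) with i.i.d. nonnegative unit-mean marks, L is a
physically feasible path loss with L(0) = L₀ and γ = ∫₀^∞ rL(r)dr, and h̃ is an
independent nonnegative unit-mean variable, is a.s. finite, strictly positive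
whenever h̃ > 0, and L₀αζ/(γ(2π + αβ)) ≤ 𝔼[S] ≤ L₀αζ/(2πγ). -/
theorem stmt3 {Ω : Type*} [MeasurableSpace Ω] (P : Measure Ω) [IsProbabilityMeasure P]
    (α β ζ L₀ γ : ℝ) (hα : 0 < α) (hβ : 0 < β) (hζ : 0 < ζ) (hL0 : 0 < L₀) (hγpos : 0 < γ)
    (ν : Measure ℝ) [IsProbabilityMeasure ν]
    (hν0 : ν (Set.Iio 0) = 0) (hνmean : ∫ x, x ∂ν = 1)
    (L : ℝ → ℝ) (hLmeas : Measurable L) (hLnonneg : ∀ r, 0 ≤ L r)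
    (hLmono : AntitoneOn L (Set.Ici 0)) (hL0val : L 0 = L₀)
    (hγ : γ = ∫ r in Set.Ioi (0:ℝ), r * L r)
    (hint : IntegrableOn (fun r => r * L r) (Set.Ioi 0))
    (pp : PoissonPP P ((ENNReal.ofReal (β / (2 * π * ζ)) • (volume : Measure Plane)).prod ν))
    (htilde : Ω → ℝ) (hthmeas : Measurable htilde) (hthn : ∀ ω, 0 ≤ htilde ω)
    (hthmean : ∫ ω, htilde ω ∂P = 1)
    (hindep : IndepFun htilde (fun ω => (shotNoise pp L ω).toReal) P)
    (S : Ω → ℝ)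
    (hS : ∀ ω, S ω = L₀ * htilde ω / ((shotNoise pp L ω).toReal + 2 * π * γ / (α * ζ))) :
    (∀ᵐ ω ∂P, shotNoise pp L ω < ⊤) ∧
    (∀ᵐ ω ∂P, 0 < htilde ω → 0 < S ω) ∧
    (L₀ * α * ζ / (γ * (2 * π + α * β)) ≤ ∫ ω, S ω ∂P) ∧
    (∫ ω, S ω ∂P ≤ L₀ * α * ζ / (2 * π * γ)) := by
  have hπ : (0:ℝ) < π := Real.pi_pos
  set c₀ : ℝ := 2 * π * γ / (α * ζ) with hc₀def
  have hc₀ : 0 < c₀ := by rw [hc₀def]; positivity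
  set m₀ : ℝ := β * γ / ζ with hm₀def
  have hm₀ : 0 < m₀ := by rw [hm₀def]; positivity
  set f : Plane × ℝ → ℝ≥0∞ := fun p => ENNReal.ofReal (L ‖p.1‖ * p.2) with hfdef
  have hfmeas : Measurable f :=
    ENNReal.measurable_ofReal.comp
      ((hLmeas.comp (measurable_norm.comp measurable_fst)).mul measurable_snd)
  -- spanning sets of finite intensity
  set B : ℕ → Set (Plane × ℝ) :=
    fun n => (Metric.closedBall (0:Plane) n) ×ˢ (Set.univ : Set ℝ) with hBdef
  have hBm : ∀ n, MeasurableSet (B n) := fun n =>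
    measurableSet_closedBall.prod MeasurableSet.univ
  have hBmono : Monotone B := fun i j hij =>
    Set.prod_mono (Metric.closedBall_subset_closedBall (by exact_mod_cast hij)) le_rfl
  have hBU : (⋃ n, B n) = Set.univ := by
    ext p
    simp only [hBdef, Set.mem_iUnion, Set.mem_prod, Metric.mem_closedBall, dist_zero_right,
      Set.mem_univ, and_true, iff_true]
    exact ⟨⌈‖p.1‖⌉₊, Nat.le_ceil _⟩
  have hBfin : ∀ n,
      ((ENNReal.ofReal (β / (2 * π * ζ)) • (volume : Measure Plane)).prod ν) (B n) ≠ ⊤ := by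
    intro n
    rw [hBdef, Measure.prod_prod, measure_univ, mul_one, Measure.smul_apply, smul_eq_mul]
    exact ENNReal.mul_ne_top ENNReal.ofReal_ne_top measure_closedBall_lt_top.ne
  -- marks are a.e. nonnegative with unit mean
  have hν_nonneg : ∀ᵐ y ∂ν, 0 ≤ y := by
    rw [ae_iff]
    have hset : {y : ℝ | ¬ 0 ≤ y} = Set.Iio 0 := by ext y; simp [not_le]
    rw [hset]; exact hν0
  have hIntId : Integrable (fun y : ℝ => y) ν := by
    by_contra hcon
    rw [integral_undef hcon] at hνmean; exact one_ne_zero hνmean.symm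
  have hν1 : ∫⁻ y, ENNReal.ofReal y ∂ν = 1 := by
    rw [← ofReal_integral_eq_lintegral_ofReal hIntId hν_nonneg, hνmean, ENNReal.ofReal_one]
  -- radial integral
  have hK : ∫⁻ x : Plane, ENNReal.ofReal (L ‖x‖) ∂volume = ENNReal.ofReal (2 * π * γ) := by
    rw [lintegral_norm_plane _ hLmeas.ennreal_ofReal]
    have h1 : ∫⁻ r in Set.Ioi (0:ℝ), ENNReal.ofReal r * ENNReal.ofReal (L r)
        = ∫⁻ r in Set.Ioi (0:ℝ), ENNReal.ofReal (r * L r) := by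
      refine lintegral_congr_ae ?_
      filter_upwards [ae_restrict_mem measurableSet_Ioi] with r hr
      rw [ENNReal.ofReal_mul (le_of_lt hr)]
    have h2 : ENNReal.ofReal (∫ r in Set.Ioi (0:ℝ), r * L r)
        = ∫⁻ r in Set.Ioi (0:ℝ), ENNReal.ofReal (r * L r) := by
      refine ofReal_integral_eq_lintegral_ofReal hint ?_
      filter_upwards [ae_restrict_mem measurableSet_Ioi] with r hr
      exact mul_nonneg (le_of_lt hr) (hLnonneg r)
    rw [h1, ← h2, ← hγ, ENNReal.ofReal_mul (by positivity : (0:ℝ) ≤ 2 * π),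
      ENNReal.ofReal_mul (by norm_num : (0:ℝ) ≤ 2), ENNReal.ofReal_ofNat]
  -- the expected shot noise (Campbell's theorem)
  have hinner : ∀ x : Plane, ∫⁻ y, f (x, y) ∂ν = ENNReal.ofReal (L ‖x‖) := by
    intro x
    have h1 : ∫⁻ y, f (x, y) ∂ν = ∫⁻ y, ENNReal.ofReal (L ‖x‖) * ENNReal.ofReal y ∂ν := by
      refine lintegral_congr_ae ?_
      filter_upwards [hν_nonneg] with y hy
      rw [hfdef]; exact ENNReal.ofReal_mul (hLnonneg _)
    rw [h1, lintegral_const_mul _ ENNReal.measurable_ofReal, hν1, mul_one]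
  have hEI : ∫⁻ ω, shotNoise pp L ω ∂P = ENNReal.ofReal m₀ :=
    calc ∫⁻ ω, shotNoise pp L ω ∂P
        = ∫⁻ p, f p ∂((ENNReal.ofReal (β / (2 * π * ζ)) • (volume : Measure Plane)).prod ν) :=
          pp_campbell pp B hBm hBmono hBU hBfin f hfmeas
      _ = ∫⁻ x : Plane, ∫⁻ y, f (x, y) ∂ν
            ∂(ENNReal.ofReal (β / (2 * π * ζ)) • (volume : Measure Plane)) :=
          lintegral_prod f hfmeas.aemeasurable
      _ = ∫⁻ x : Plane, ENNReal.ofReal (L ‖x‖)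
            ∂(ENNReal.ofReal (β / (2 * π * ζ)) • (volume : Measure Plane)) :=
          lintegral_congr hinner
      _ = ENNReal.ofReal (β / (2 * π * ζ)) * ∫⁻ x : Plane, ENNReal.ofReal (L ‖x‖) ∂volume :=
          lintegral_smul_measure _ _
      _ = ENNReal.ofReal (β / (2 * π * ζ)) * ENNReal.ofReal (2 * π * γ) := by rw [hK]
      _ = ENNReal.ofReal m₀ := by
          rw [← ENNReal.ofReal_mul (by positivity)]
          congr 1
          rw [hm₀def]
          field_simp
  have hSNmeas : Measurable (fun ω => shotNoise pp L ω) := by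
    have hNmeas : Measurable pp.N :=
      Measure.measurable_of_measurable_coe _ (fun A hA => pp.measurable_count A hA)
    exact (Measure.measurable_lintegral hfmeas).comp hNmeas
  have hEIne : ∫⁻ ω, shotNoise pp L ω ∂P ≠ ⊤ := by rw [hEI]; exact ENNReal.ofReal_ne_top
  have part1 : ∀ᵐ ω ∂P, shotNoise pp L ω < ⊤ := ae_lt_top hSNmeas hEIne
  -- toReal of the shot noise
  have hJmeas : Measurable (fun ω => (shotNoise pp L ω).toReal) := hSNmeas.ennreal_toReal
  have hJnonneg : ∀ ω, 0 ≤ (shotNoise pp L ω).toReal := fun ω => ENNReal.toReal_nonneg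
  have hJint : Integrable (fun ω => (shotNoise pp L ω).toReal) P :=
    integrable_toReal_of_lintegral_ne_top hSNmeas.aemeasurable hEIne
  have hJmean : ∫ ω, (shotNoise pp L ω).toReal ∂P = m₀ := by
    rw [integral_toReal hSNmeas.aemeasurable part1, hEI, ENNReal.toReal_ofReal hm₀.le]
  have hthint : Integrable htilde P := by
    by_contra hcon
    rw [integral_undef hcon] at hthmean; exact one_ne_zero hthmean.symm
  -- part 2 : positivity
  have part2 : ∀ᵐ ω ∂P, 0 < htilde ω → 0 < S ω := by
    refine ae_of_all _ fun ω hh => ?_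
    rw [hS ω]
    exact div_pos (mul_pos hL0 hh) (add_pos_of_nonneg_of_pos (hJnonneg ω) hc₀)
  have hSnonneg : ∀ ω, 0 ≤ S ω := fun ω => by
    rw [hS ω]
    exact div_nonneg (mul_nonneg hL0.le (hthn ω))
      (add_nonneg (hJnonneg ω) hc₀.le)
  -- part 4 : upper bound
  have part4 : ∫ ω, S ω ∂P ≤ L₀ * α * ζ / (2 * π * γ) := by
    have hub : ∀ ω, S ω ≤ (L₀ / c₀) * htilde ω := by
      intro ω
      rw [hS ω]
      calc L₀ * htilde ω / ((shotNoise pp L ω).toReal + c₀)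
          ≤ L₀ * htilde ω / c₀ := by
            apply div_le_div_of_nonneg_left (mul_nonneg hL0.le (hthn ω)) hc₀
            exact le_add_of_nonneg_left (hJnonneg ω)
        _ = (L₀ / c₀) * htilde ω := by ring
    have hmono := integral_mono_of_nonneg (ae_of_all _ hSnonneg)
      (hthint.const_mul (L₀ / c₀)) (ae_of_all _ hub)
    rw [integral_const_mul, hthmean, mul_one] at hmono
    refine hmono.trans (le_of_eq ?_)
    rw [hc₀def]
    field_simp
  -- part 3 : lower bound
  have part3 : L₀ * α * ζ / (γ * (2 * π + α * β)) ≤ ∫ ω, S ω ∂P := by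
    have hgmeas : Measurable (fun ω => L₀ / ((shotNoise pp L ω).toReal + c₀)) :=
      measurable_const.div (hJmeas.add_const c₀)
    have hindep' : IndepFun (fun ω => L₀ / ((shotNoise pp L ω).toReal + c₀)) htilde P := by
      have h := hindep.comp (φ := id) (ψ := fun x : ℝ => L₀ / (x + c₀)) measurable_id
        (measurable_const.div (measurable_id.add_const c₀))
      exact h.symm
    have hgub : ∀ ω, L₀ / ((shotNoise pp L ω).toReal + c₀) ≤ L₀ / c₀ := by
      intro ω
      apply div_le_div_of_nonneg_left hL0.le hc₀
      exact le_add_of_nonneg_left (hJnonneg ω)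
    have hgnonneg : ∀ ω, 0 ≤ L₀ / ((shotNoise pp L ω).toReal + c₀) := fun ω =>
      div_nonneg hL0.le (add_nonneg (hJnonneg ω) hc₀.le)
    have hgint : Integrable (fun ω => L₀ / ((shotNoise pp L ω).toReal + c₀)) P := by
      refine Integrable.mono' (integrable_const (L₀ / c₀)) hgmeas.aestronglyMeasurable
        (ae_of_all _ fun ω => ?_)
      rw [Real.norm_of_nonneg (hgnonneg ω)]
      exact hgub ω
    have hprod : ∫ ω, S ω ∂P = ∫ ω, L₀ / ((shotNoise pp L ω).toReal + c₀) ∂P := by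
      calc ∫ ω, S ω ∂P
          = ∫ ω, (L₀ / ((shotNoise pp L ω).toReal + c₀)) * htilde ω ∂P := by
            refine integral_congr_ae (ae_of_all _ fun ω => ?_)
            rw [hS ω]; ring
        _ = (∫ ω, L₀ / ((shotNoise pp L ω).toReal + c₀) ∂P) * ∫ ω, htilde ω ∂P :=
            hindep'.integral_mul_eq_mul_integral hgmeas.aestronglyMeasurable hthmeas.aestronglyMeasurable
        _ = ∫ ω, L₀ / ((shotNoise pp L ω).toReal + c₀) ∂P := by rw [hthmean, mul_one]
    -- tangent line bound (Jensen)
    have htangent : ∀ x : ℝ, 0 ≤ x →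
        L₀ / (m₀ + c₀) - (L₀ / (m₀ + c₀) ^ 2) * (x - m₀) ≤ L₀ / (x + c₀) := by
      intro x hx
      have h1 : 0 < x + c₀ := add_pos_of_nonneg_of_pos hx hc₀
      have h2 : 0 < m₀ + c₀ := by positivity
      have key : L₀ / (x + c₀) - (L₀ / (m₀ + c₀) - (L₀ / (m₀ + c₀) ^ 2) * (x - m₀))
          = L₀ * (x - m₀) ^ 2 / ((x + c₀) * (m₀ + c₀) ^ 2) := by
        field_simp
        ring
      have hpos : 0 ≤ L₀ * (x - m₀) ^ 2 / ((x + c₀) * (m₀ + c₀) ^ 2) := by positivity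
      linarith [key ▸ hpos]
    have e1 : Integrable (fun ω => (shotNoise pp L ω).toReal - m₀) P :=
      hJint.sub (integrable_const m₀)
    have e2 : Integrable
        (fun ω => (L₀ / (m₀ + c₀) ^ 2) * ((shotNoise pp L ω).toReal - m₀)) P :=
      e1.const_mul _
    have hφint : Integrable
        (fun ω => L₀ / (m₀ + c₀) - (L₀ / (m₀ + c₀) ^ 2) * ((shotNoise pp L ω).toReal - m₀)) P :=
      (integrable_const _).sub e2
    have hφmean : ∫ ω,
        (L₀ / (m₀ + c₀) - (L₀ / (m₀ + c₀) ^ 2) * ((shotNoise pp L ω).toReal - m₀)) ∂P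
        = L₀ / (m₀ + c₀) := by
      rw [integral_sub (integrable_const _) e2, integral_const_mul,
        integral_sub hJint (integrable_const m₀), hJmean,
        integral_const, integral_const, probReal_univ]
      simp
    have hge : L₀ / (m₀ + c₀) ≤ ∫ ω, L₀ / ((shotNoise pp L ω).toReal + c₀) ∂P := by
      rw [← hφmean]
      exact integral_mono hφint hgint (fun ω => htangent _ (hJnonneg ω))
    have harith : L₀ * α * ζ / (γ * (2 * π + α * β)) = L₀ / (m₀ + c₀) := by
      rw [hm₀def, hc₀def]
      rw [div_eq_div_iff (by positivity) (by positivity)]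
      field_simp
      ring
    rw [hprod, harith]
    exact hge
  exact ⟨part1, part2, part3, part4⟩
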